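/- arXiv:1605.05320 — 2 statements merged into one kernel-verified Lean document; each statement's English description precedes it below -/
import Mathlib

section
/- Let a < b and t₀ < t_f be real numbers, let A : [a,b] → ℝ^{n×n} be continuously differentiable, and let q, q̂ : [a,b] × [t₀,t_f] → ℝⁿ be continuously differentiable on the closed rectangle. Suppose q solves the forward hyperbolic system q_t(x,t) + A(x) q_x(x,t) = 0, q̂ solves the adjoint equation q̂_t(x,t) + (A(x)ᵀ q̂(x,t))_x = 0, and the boundary flux vanishes: q̂(a,t)ᵀ A(a) q(a,t) = 0 and q̂(b,t)ᵀ A(b) q(b,t) = 0 for all t ∈ [t₀, t_f]. Then the spatial integral of the inner product is conserved in time: for every t ∈ [t₀, t_f], ∫_a^b q̂(x,t)ᵀ q(x,t) dx = ∫_a^b q̂(x,t_f)ᵀ q(x,t_f) dx. -/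
open Matrix Set MeasureTheory

theorem hasDerivWithinAt_dot {n : ℕ} {s : Set ℝ} {x : ℝ} {u v : ℝ → Fin n → ℝ}
    {u' v' : Fin n → ℝ} (hu : HasDerivWithinAt u u' s x) (hv : HasDerivWithinAt v v' s x) :
    HasDerivWithinAt (fun y => u y ⬝ᵥ v y) (u' ⬝ᵥ v x + u x ⬝ᵥ v') s x := by
  have hu' := hasDerivWithinAt_pi.mp hu
  have hv' := hasDerivWithinAt_pi.mp hv
  have h : HasDerivWithinAt (fun y => ∑ i, u y i * v y i)
      (∑ i : Fin n, (u' i * v x i + u x i * v' i)) s x :=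
    HasDerivWithinAt.fun_sum fun i _ => (hu' i).mul (hv' i)
  simpa [dotProduct, Finset.sum_add_distrib] using h

theorem contOn_dot {n : ℕ} {α : Type*} [TopologicalSpace α] {S : Set α}
    {f g : α → Fin n → ℝ} (hf : ContinuousOn f S) (hg : ContinuousOn g S) :
    ContinuousOn (fun p => f p ⬝ᵥ g p) S := by
  simp only [dotProduct]
  exact continuousOn_finset_sum _ fun i _ =>
    (((continuous_apply i).comp_continuousOn hf)).mul
      ((continuous_apply i).comp_continuousOn hg)

/-- If `q` solves the forward hyperbolic system `q_t + A(x) q_x = 0`, `q̂` solves the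
adjoint equation `q̂_t + (A(x)ᵀ q̂)_x = 0` on the rectangle `[a,b] × [t₀,t_f]` (with
everything continuously differentiable), and the boundary flux `q̂ᵀ A q` vanishes at
`x = a` and `x = b`, then `∫_a^b q̂(x,t)ᵀ q(x,t) dx` is the same for every
`t ∈ [t₀,t_f]`, in particular equal to its value at `t = t_f`. -/
theorem adjoint_inner_product_conservation_1d {n : ℕ}
    (a b t₀ tf : ℝ) (hab : a < b) (ht : t₀ < tf)
    (A A' : ℝ → Matrix (Fin n) (Fin n) ℝ)
    (q qhat qx qt qhatt dAqhat : ℝ → ℝ → Fin n → ℝ)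
    -- A is continuously differentiable on [a,b] (entrywise), with derivative A'
    (hA : ∀ i j, ∀ x ∈ Icc a b,
      HasDerivWithinAt (fun x' => A x' i j) (A' x i j) (Icc a b) x)
    (hA'c : ∀ i j, ContinuousOn (fun x => A' x i j) (Icc a b))
    -- the partial derivatives of q exist on the rectangle
    (hqx : ∀ x ∈ Icc a b, ∀ t ∈ Icc t₀ tf,
      HasDerivWithinAt (fun x' => q x' t) (qx x t) (Icc a b) x)
    (hqt : ∀ x ∈ Icc a b, ∀ t ∈ Icc t₀ tf,
      HasDerivWithinAt (fun t' => q x t') (qt x t) (Icc t₀ tf) t)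
    -- the partial derivatives of q̂ (and of x ↦ A(x)ᵀ q̂(x,t)) exist on the rectangle
    (hqhatt : ∀ x ∈ Icc a b, ∀ t ∈ Icc t₀ tf,
      HasDerivWithinAt (fun t' => qhat x t') (qhatt x t) (Icc t₀ tf) t)
    (hdAqhat : ∀ x ∈ Icc a b, ∀ t ∈ Icc t₀ tf,
      HasDerivWithinAt (fun x' => (A x')ᵀ *ᵥ qhat x' t) (dAqhat x t) (Icc a b) x)
    -- continuity of the solutions and their derivatives on the closed rectangle
    (hqc : ContinuousOn (fun p : ℝ × ℝ => q p.1 p.2) (Icc a b ×ˢ Icc t₀ tf))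
    (hqhatc : ContinuousOn (fun p : ℝ × ℝ => qhat p.1 p.2) (Icc a b ×ˢ Icc t₀ tf))
    (hqxc : ContinuousOn (fun p : ℝ × ℝ => qx p.1 p.2) (Icc a b ×ˢ Icc t₀ tf))
    (hqtc : ContinuousOn (fun p : ℝ × ℝ => qt p.1 p.2) (Icc a b ×ˢ Icc t₀ tf))
    (hqhattc : ContinuousOn (fun p : ℝ × ℝ => qhatt p.1 p.2) (Icc a b ×ˢ Icc t₀ tf))
    (hdAqhatc : ContinuousOn (fun p : ℝ × ℝ => dAqhat p.1 p.2) (Icc a b ×ˢ Icc t₀ tf))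
    -- q solves the forward problem and q̂ solves the adjoint equation
    (hforward : ∀ x ∈ Icc a b, ∀ t ∈ Icc t₀ tf, qt x t + A x *ᵥ qx x t = 0)
    (hadjoint : ∀ x ∈ Icc a b, ∀ t ∈ Icc t₀ tf, qhatt x t + dAqhat x t = 0)
    -- the boundary flux vanishes
    (hbc_a : ∀ t ∈ Icc t₀ tf, qhat a t ⬝ᵥ (A a *ᵥ q a t) = 0)
    (hbc_b : ∀ t ∈ Icc t₀ tf, qhat b t ⬝ᵥ (A b *ᵥ q b t) = 0) :
    ∀ t ∈ Icc t₀ tf,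
      ∫ x in a..b, qhat x t ⬝ᵥ q x t = ∫ x in a..b, qhat x tf ⬝ᵥ q x tf := by
  intro t htmem
  obtain ⟨ht₀t, httf⟩ := htmem
  have htmem' : t ∈ Icc t₀ tf := ⟨ht₀t, httf⟩
  have htfmem : tf ∈ Icc t₀ tf := ⟨ht.le, le_rfl⟩
  set G : ℝ → ℝ → ℝ := fun x s => qhat x s ⬝ᵥ q x s with hG
  set Gt : ℝ → ℝ → ℝ := fun x s => qhatt x s ⬝ᵥ q x s + qhat x s ⬝ᵥ qt x s with hGtdef
  set H : ℝ → ℝ → ℝ := fun x s => ((A x)ᵀ *ᵥ qhat x s) ⬝ᵥ q x s with hHdef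
  set Hx : ℝ → ℝ → ℝ :=
    fun x s => dAqhat x s ⬝ᵥ q x s + ((A x)ᵀ *ᵥ qhat x s) ⬝ᵥ qx x s with hHxdef
  have hswap : ∀ (u w : Fin n → ℝ) (M : Matrix (Fin n) (Fin n) ℝ),
      (Mᵀ *ᵥ u) ⬝ᵥ w = u ⬝ᵥ (M *ᵥ w) := by
    intro u w M
    rw [Matrix.mulVec_transpose, ← Matrix.dotProduct_mulVec]
  -- slices of two-variable continuous functions
  have slicex : ∀ (f : ℝ → ℝ → Fin n → ℝ),
      ContinuousOn (fun p : ℝ × ℝ => f p.1 p.2) (Icc a b ×ˢ Icc t₀ tf) →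
      ∀ s ∈ Icc t₀ tf, ContinuousOn (fun x => f x s) (Icc a b) := by
    intro f hf s hs
    exact hf.comp (Continuous.continuousOn (continuous_id.prodMk continuous_const))
      fun x hx => ⟨hx, hs⟩
  have slicet : ∀ (f : ℝ → ℝ → ℝ),
      ContinuousOn (fun p : ℝ × ℝ => f p.1 p.2) (Icc a b ×ˢ Icc t₀ tf) →
      ∀ x ∈ Icc a b, ContinuousOn (fun s => f x s) (Icc t₀ tf) := by
    intro f hf x hx
    exact hf.comp (Continuous.continuousOn (continuous_const.prodMk continuous_id))
      fun s hs => ⟨hx, hs⟩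
  -- two-variable continuity of Gt
  have GtC : ContinuousOn (fun p : ℝ × ℝ => Gt p.1 p.2) (Icc a b ×ˢ Icc t₀ tf) :=
    (contOn_dot hqhattc hqc).add (contOn_dot hqhatc hqtc)
  -- pointwise identity Gt = -Hx
  have hGtHx : ∀ x ∈ Icc a b, ∀ s ∈ Icc t₀ tf, Gt x s = -Hx x s := by
    intro x hx s hs
    have h1 : qt x s = -(A x *ᵥ qx x s) := eq_neg_of_add_eq_zero_left (hforward x hx s hs)
    have h2 : qhatt x s = -dAqhat x s := eq_neg_of_add_eq_zero_left (hadjoint x hx s hs)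
    simp only [hGtdef, hHxdef, h1, h2, neg_dotProduct, dotProduct_neg, hswap]
    ring
  -- Step A : FTC in time
  have stepA : ∀ x ∈ Icc a b, ∫ s in t..tf, Gt x s = G x tf - G x t := by
    intro x hx
    have h1 : ContinuousOn (fun s => qhat x s) (Icc t₀ tf) :=
      fun s hs => (hqhatt x hx s hs).continuousWithinAt
    have h2 : ContinuousOn (fun s => q x s) (Icc t₀ tf) :=
      fun s hs => (hqt x hx s hs).continuousWithinAt
    have hcont : ContinuousOn (fun s => G x s) (Icc t tf) :=
      (contOn_dot h1 h2).mono (Icc_subset_Icc ht₀t le_rfl)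
    have hderiv : ∀ s ∈ Ioo t tf, HasDerivWithinAt (fun s' => G x s') (Gt x s) (Ioi s) s := by
      intro s hs
      have hsmem : s ∈ Icc t₀ tf := ⟨ht₀t.trans hs.1.le, hs.2.le⟩
      have hnhds : Icc t₀ tf ∈ nhds s := Icc_mem_nhds (lt_of_le_of_lt ht₀t hs.1) hs.2
      exact ((hasDerivWithinAt_dot (hqhatt x hx s hsmem) (hqt x hx s hsmem)).hasDerivAt
        hnhds).hasDerivWithinAt
    have hint : IntervalIntegrable (fun s => Gt x s) volume t tf := by
      apply ContinuousOn.intervalIntegrable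
      rw [uIcc_of_le httf]
      exact (slicet Gt GtC x hx).mono (Icc_subset_Icc ht₀t le_rfl)
    exact intervalIntegral.integral_eq_sub_of_hasDeriv_right_of_le httf hcont hderiv hint
  -- Step B : FTC in space, with boundary conditions
  have stepB : ∀ s ∈ Icc t₀ tf, ∫ x in a..b, Hx x s = 0 := by
    intro s hs
    have hc1 : ContinuousOn (fun x => (A x)ᵀ *ᵥ qhat x s) (Icc a b) :=
      fun x hx => (hdAqhat x hx s hs).continuousWithinAt
    have hc2 : ContinuousOn (fun x => q x s) (Icc a b) :=
      fun x hx => (hqx x hx s hs).continuousWithinAt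
    have hcont : ContinuousOn (fun x => H x s) (Icc a b) := contOn_dot hc1 hc2
    have hderiv : ∀ x ∈ Ioo a b, HasDerivWithinAt (fun x' => H x' s) (Hx x s) (Ioi x) x := by
      intro x hx
      have hxmem : x ∈ Icc a b := ⟨hx.1.le, hx.2.le⟩
      have hnhds : Icc a b ∈ nhds x := Icc_mem_nhds hx.1 hx.2
      exact ((hasDerivWithinAt_dot (hdAqhat x hxmem s hs) (hqx x hxmem s hs)).hasDerivAt
        hnhds).hasDerivWithinAt
    have hint : IntervalIntegrable (fun x => Hx x s) volume a b := by
      apply ContinuousOn.intervalIntegrable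
      rw [uIcc_of_le hab.le]
      exact (contOn_dot (slicex dAqhat hdAqhatc s hs) hc2).add
        (contOn_dot hc1 (slicex qx hqxc s hs))
    have hftc := intervalIntegral.integral_eq_sub_of_hasDeriv_right_of_le hab.le hcont
      hderiv hint
    have hHa : H a s = 0 := by
      simp only [hHdef, hswap]
      exact hbc_a s hs
    have hHb : H b s = 0 := by
      simp only [hHdef, hswap]
      exact hbc_b s hs
    rw [hftc, hHa, hHb, sub_zero]
  -- Fubini + Step B : double integral vanishes
  have hIoc_sub : Ioc t tf ⊆ Icc t₀ tf := fun s hs => ⟨ht₀t.trans hs.1.le, hs.2⟩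
  have hGtInt : Integrable (Function.uncurry fun x s => Gt x s)
      ((volume.restrict (Ioc a b)).prod (volume.restrict (Ioc t tf))) := by
    rw [Measure.prod_restrict]
    have h1 : IntegrableOn (fun p : ℝ × ℝ => Gt p.1 p.2) (Icc a b ×ˢ Icc t₀ tf)
        (volume.prod volume) := by
      rw [← Measure.volume_eq_prod]
      exact GtC.integrableOn_compact (isCompact_Icc.prod isCompact_Icc)
    exact h1.mono_set (prod_mono Ioc_subset_Icc_self hIoc_sub)
  have hdouble : ∫ x in a..b, ∫ s in t..tf, Gt x s = 0 := by
    rw [intervalIntegral.integral_of_le hab.le]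
    simp_rw [intervalIntegral.integral_of_le httf]
    rw [MeasureTheory.integral_integral_swap hGtInt]
    have hz : ∀ s ∈ Ioc t tf, (fun s => ∫ x in Ioc a b, Gt x s) s = (fun _ => (0 : ℝ)) s := by
      intro s hs
      have hsmem : s ∈ Icc t₀ tf := hIoc_sub hs
      simp only
      rw [← intervalIntegral.integral_of_le hab.le]
      have hcongr : ∫ x in a..b, Gt x s = ∫ x in a..b, -Hx x s := by
        apply intervalIntegral.integral_congr
        intro x hx
        rw [uIcc_of_le hab.le] at hx
        exact hGtHx x hx s hsmem
      rw [hcongr, intervalIntegral.integral_neg, stepB s hsmem, neg_zero]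
    rw [setIntegral_congr_fun measurableSet_Ioc hz]
    simp
  -- integrability of the slices of G
  have hGint : ∀ s ∈ Icc t₀ tf, IntervalIntegrable (fun x => G x s) volume a b := by
    intro s hs
    apply ContinuousOn.intervalIntegrable
    rw [uIcc_of_le hab.le]
    exact contOn_dot (slicex qhat hqhatc s hs) (slicex q hqc s hs)
  have hfinal : (∫ x in a..b, G x tf) - ∫ x in a..b, G x t = 0 := by
    rw [← intervalIntegral.integral_sub (hGint tf htfmem) (hGint t htmem')]
    have hcongr : ∫ x in a..b, (G x tf - G x t) = ∫ x in a..b, ∫ s in t..tf, Gt x s := by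
      apply intervalIntegral.integral_congr
      intro x hx
      rw [uIcc_of_le hab.le] at hx
      exact (stepA x hx).symm
    rw [hcongr, hdouble]
  show (∫ x in a..b, G x t) = ∫ x in a..b, G x tf
  linarith
end

section
/- Let a < b and t₀ < t_f be real numbers, let g > 0, and let h̄ : [a,b] → ℝ be continuously differentiable with h̄(x) > 0. Let η, μ, η̂, û : [a,b] × [t₀,t_f] → ℝ be continuously differentiable on the closed rectangle and satisfy the linearized shallow water equations η_t + μ_x = 0 and μ_t + g h̄(x) η_x = 0, the adjoint shallow water equations η̂_t + (g h̄(x) û)_x = 0 and û_t + η̂_x = 0, and the reflecting boundary conditions μ(a,t) = μ(b,t) = 0 and û(a,t) = û(b,t) = 0 for all t ∈ [t₀,t_f]. Then for every t ∈ [t₀,t_f], ∫_a^b [ η̂(x,t) η(x,t) + û(x,t) μ(x,t) ] dx = ∫_a^b [ η̂(x,t_f) η(x,t_f) + û(x,t_f) μ(x,t_f) ] dx. -/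
open Set

/-- Conservation of the inner product for the linearized 1D shallow water equations:
if `(η, μ)` solves `η_t + μ_x = 0`, `μ_t + g h̄(x) η_x = 0`, `(η̂, û)` solves the adjoint
equations `η̂_t + (g h̄(x) û)_x = 0`, `û_t + η̂_x = 0` on `[a,b] × [t₀,t_f]` (with `h̄`
continuously differentiable and positive and all solutions continuously differentiable),
and the reflecting boundary conditions `μ = û = 0` hold at `x = a, b`, then
`∫_a^b (η̂ η + û μ) dx` is the same at every `t ∈ [t₀,t_f]` as at `t = t_f`. -/
theorem shallow_water_adjoint_conservation
    (a b t₀ tf g : ℝ) (hab : a < b) (ht : t₀ < tf) (hg : 0 < g)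
    (hbar hbar' : ℝ → ℝ)
    (eta mu etaHat uHat : ℝ → ℝ → ℝ)
    (etax etat mux mu_t etaHatx etaHatt uHatx uHatt : ℝ → ℝ → ℝ)
    -- h̄ is continuously differentiable and positive on [a,b]
    (hbar_pos : ∀ x ∈ Icc a b, 0 < hbar x)
    (hbar_deriv : ∀ x ∈ Icc a b, HasDerivWithinAt hbar (hbar' x) (Icc a b) x)
    (hbar'_cont : ContinuousOn hbar' (Icc a b))
    -- the partial derivatives of η, μ, η̂, û exist on the rectangle
    (hetax : ∀ x ∈ Icc a b, ∀ t ∈ Icc t₀ tf,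
      HasDerivWithinAt (fun x' => eta x' t) (etax x t) (Icc a b) x)
    (hetat : ∀ x ∈ Icc a b, ∀ t ∈ Icc t₀ tf,
      HasDerivWithinAt (fun t' => eta x t') (etat x t) (Icc t₀ tf) t)
    (hmux : ∀ x ∈ Icc a b, ∀ t ∈ Icc t₀ tf,
      HasDerivWithinAt (fun x' => mu x' t) (mux x t) (Icc a b) x)
    (hmut : ∀ x ∈ Icc a b, ∀ t ∈ Icc t₀ tf,
      HasDerivWithinAt (fun t' => mu x t') (mu_t x t) (Icc t₀ tf) t)
    (hetaHatx : ∀ x ∈ Icc a b, ∀ t ∈ Icc t₀ tf,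
      HasDerivWithinAt (fun x' => etaHat x' t) (etaHatx x t) (Icc a b) x)
    (hetaHatt : ∀ x ∈ Icc a b, ∀ t ∈ Icc t₀ tf,
      HasDerivWithinAt (fun t' => etaHat x t') (etaHatt x t) (Icc t₀ tf) t)
    (huHatx : ∀ x ∈ Icc a b, ∀ t ∈ Icc t₀ tf,
      HasDerivWithinAt (fun x' => uHat x' t) (uHatx x t) (Icc a b) x)
    (huHatt : ∀ x ∈ Icc a b, ∀ t ∈ Icc t₀ tf,
      HasDerivWithinAt (fun t' => uHat x t') (uHatt x t) (Icc t₀ tf) t)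
    -- the solutions and their partial derivatives are continuous on the rectangle
    (hetac : ContinuousOn (fun p : ℝ × ℝ => eta p.1 p.2) (Icc a b ×ˢ Icc t₀ tf))
    (hmuc : ContinuousOn (fun p : ℝ × ℝ => mu p.1 p.2) (Icc a b ×ˢ Icc t₀ tf))
    (hetaHatc : ContinuousOn (fun p : ℝ × ℝ => etaHat p.1 p.2) (Icc a b ×ˢ Icc t₀ tf))
    (huHatc : ContinuousOn (fun p : ℝ × ℝ => uHat p.1 p.2) (Icc a b ×ˢ Icc t₀ tf))
    (hetaxc : ContinuousOn (fun p : ℝ × ℝ => etax p.1 p.2) (Icc a b ×ˢ Icc t₀ tf))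
    (hetatc : ContinuousOn (fun p : ℝ × ℝ => etat p.1 p.2) (Icc a b ×ˢ Icc t₀ tf))
    (hmuxc : ContinuousOn (fun p : ℝ × ℝ => mux p.1 p.2) (Icc a b ×ˢ Icc t₀ tf))
    (hmutc : ContinuousOn (fun p : ℝ × ℝ => mu_t p.1 p.2) (Icc a b ×ˢ Icc t₀ tf))
    (hetaHatxc : ContinuousOn (fun p : ℝ × ℝ => etaHatx p.1 p.2) (Icc a b ×ˢ Icc t₀ tf))
    (hetaHattc : ContinuousOn (fun p : ℝ × ℝ => etaHatt p.1 p.2) (Icc a b ×ˢ Icc t₀ tf))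
    (huHatxc : ContinuousOn (fun p : ℝ × ℝ => uHatx p.1 p.2) (Icc a b ×ˢ Icc t₀ tf))
    (huHattc : ContinuousOn (fun p : ℝ × ℝ => uHatt p.1 p.2) (Icc a b ×ˢ Icc t₀ tf))
    -- the linearized shallow water equations
    (hswe1 : ∀ x ∈ Icc a b, ∀ t ∈ Icc t₀ tf, etat x t + mux x t = 0)
    (hswe2 : ∀ x ∈ Icc a b, ∀ t ∈ Icc t₀ tf, mu_t x t + g * hbar x * etax x t = 0)
    -- the adjoint shallow water equations
    (hadj1 : ∀ x ∈ Icc a b, ∀ t ∈ Icc t₀ tf,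
      etaHatt x t
        + derivWithin (fun x' => g * hbar x' * uHat x' t) (Icc a b) x = 0)
    (hadj2 : ∀ x ∈ Icc a b, ∀ t ∈ Icc t₀ tf, uHatt x t + etaHatx x t = 0)
    -- reflecting boundary conditions
    (hbc_mu : ∀ t ∈ Icc t₀ tf, mu a t = 0 ∧ mu b t = 0)
    (hbc_uHat : ∀ t ∈ Icc t₀ tf, uHat a t = 0 ∧ uHat b t = 0) :
    ∀ t ∈ Icc t₀ tf,
      ∫ x in a..b, (etaHat x t * eta x t + uHat x t * mu x t)
        = ∫ x in a..b, (etaHat x tf * eta x tf + uHat x tf * mu x tf) := by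
  intro t htmem
  obtain ⟨ht0, htf1⟩ := htmem
  have hmemt : t ∈ Icc t₀ tf := ⟨ht0, htf1⟩
  have habl : a ≤ b := le_of_lt hab
  -- abbreviations
  set P : ℝ → ℝ → ℝ := fun x s => etaHat x s * eta x s + uHat x s * mu x s with hPdef
  set Q : ℝ → ℝ → ℝ := fun x s =>
    (etaHatt x s * eta x s + etaHat x s * etat x s) +
      (uHatt x s * mu x s + uHat x s * mu_t x s) with hQdef
  -- slices of jointly continuous functions
  have sliceT : ∀ {f : ℝ → ℝ → ℝ},
      ContinuousOn (fun p : ℝ × ℝ => f p.1 p.2) (Icc a b ×ˢ Icc t₀ tf) →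
      ∀ x ∈ Icc a b, ContinuousOn (fun s => f x s) (Icc t₀ tf) := by
    intro f hf x hx
    have : ContinuousOn (fun s : ℝ => ((x, s) : ℝ × ℝ)) (Icc t₀ tf) :=
      ((continuous_const.prodMk continuous_id)).continuousOn
    exact hf.comp this (fun s hs => ⟨hx, hs⟩)
  have sliceX : ∀ {f : ℝ → ℝ → ℝ},
      ContinuousOn (fun p : ℝ × ℝ => f p.1 p.2) (Icc a b ×ˢ Icc t₀ tf) →
      ∀ s ∈ Icc t₀ tf, ContinuousOn (fun x => f x s) (Icc a b) := by
    intro f hf s hs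
    have : ContinuousOn (fun x : ℝ => ((x, s) : ℝ × ℝ)) (Icc a b) :=
      ((continuous_id.prodMk continuous_const)).continuousOn
    exact hf.comp this (fun x hx => ⟨hx, hs⟩)
  -- joint continuity of Q and P
  have hQc : ContinuousOn (fun p : ℝ × ℝ => Q p.1 p.2) (Icc a b ×ˢ Icc t₀ tf) := by
    exact ((hetaHattc.mul hetac).add (hetaHatc.mul hetatc)).add
      ((huHattc.mul hmuc).add (huHatc.mul hmutc))
  have hPc : ContinuousOn (fun p : ℝ × ℝ => P p.1 p.2) (Icc a b ×ˢ Icc t₀ tf) :=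
    (hetaHatc.mul hetac).add (huHatc.mul hmuc)
  have hbarc : ContinuousOn hbar (Icc a b) :=
    fun x hx => (hbar_deriv x hx).continuousWithinAt
  -- time derivative of P is Q
  have hPd : ∀ x ∈ Icc a b, ∀ s ∈ Icc t₀ tf,
      HasDerivWithinAt (fun s' => P x s') (Q x s) (Icc t₀ tf) s := by
    intro x hx s hs
    exact ((hetaHatt x hx s hs).mul (hetat x hx s hs)).add
      ((huHatt x hx s hs).mul (hmut x hx s hs))
  -- Step A : FTC in time
  have hA : ∀ x ∈ Icc a b, ∫ s in t..tf, Q x s = P x tf - P x t := by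
    intro x hx
    refine intervalIntegral.integral_eq_sub_of_hasDeriv_right_of_le htf1 ?_ ?_ ?_
    · exact (sliceT hPc x hx).mono (Icc_subset_Icc ht0 le_rfl)
    · intro s hs
      have hs' : s ∈ Icc t₀ tf := ⟨le_of_lt (lt_of_le_of_lt ht0 hs.1), le_of_lt hs.2⟩
      have : HasDerivAt (fun s' => P x s') (Q x s) s :=
        (hPd x hx s hs').hasDerivAt
          (Icc_mem_nhds (lt_of_le_of_lt ht0 hs.1) hs.2)
      exact this.hasDerivWithinAt
    · exact ((sliceT hQc x hx).mono (Icc_subset_Icc ht0 le_rfl)).intervalIntegrable_of_Icc htf1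
  -- Step C : for each s, the x-integral of Q vanishes
  have hC : ∀ s ∈ Icc t₀ tf, ∫ x in a..b, Q x s = 0 := by
    intro s hs
    set G : ℝ → ℝ := fun x => -(g * hbar x * uHat x s * eta x s + etaHat x s * mu x s) with hGdef
    have hGd : ∀ x ∈ Icc a b, HasDerivWithinAt G (Q x s) (Icc a b) x := by
      intro x hx
      have h1 : HasDerivWithinAt (fun x' => g * hbar x') (g * hbar' x) (Icc a b) x :=
        (hbar_deriv x hx).const_mul g
      have h2 : HasDerivWithinAt (fun x' => g * hbar x' * uHat x' s)
          (g * hbar' x * uHat x s + g * hbar x * uHatx x s) (Icc a b) x :=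
        h1.mul (huHatx x hx s hs)
      have h3 := h2.mul (hetax x hx s hs)
      have h4 := (hetaHatx x hx s hs).mul (hmux x hx s hs)
      have h5 := (h3.add h4).neg
      have hdw : derivWithin (fun x' => g * hbar x' * uHat x' s) (Icc a b) x
          = g * hbar' x * uHat x s + g * hbar x * uHatx x s :=
        h2.derivWithin (uniqueDiffOn_Icc hab x hx)
      have e1 := hadj1 x hx s hs
      rw [hdw] at e1
      have e2 := hadj2 x hx s hs
      have e3 := hswe1 x hx s hs
      have e4 := hswe2 x hx s hs
      refine h5.congr_deriv (Eq.symm ?_)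
      simp only [hQdef]
      linear_combination eta x s * e1 + etaHat x s * e3 + mu x s * e2 + uHat x s * e4
    have hGcont : ContinuousOn G (Icc a b) := by
      exact ((((continuousOn_const.mul hbarc).mul (sliceX huHatc s hs)).mul
        (sliceX hetac s hs)).add ((sliceX hetaHatc s hs).mul (sliceX hmuc s hs))).neg
    have hint : ∫ x in a..b, Q x s = G b - G a := by
      refine intervalIntegral.integral_eq_sub_of_hasDeriv_right_of_le habl hGcont ?_ ?_
      · intro x hx
        have : HasDerivAt G (Q x s) x :=
          (hGd x ⟨le_of_lt hx.1, le_of_lt hx.2⟩).hasDerivAt (Icc_mem_nhds hx.1 hx.2)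
        exact this.hasDerivWithinAt
      · exact (sliceX hQc s hs).intervalIntegrable_of_Icc habl
    have hGb : G b = 0 := by
      simp [hGdef, (hbc_uHat s hs).2, (hbc_mu s hs).2]
    have hGa : G a = 0 := by
      simp [hGdef, (hbc_uHat s hs).1, (hbc_mu s hs).1]
    rw [hint, hGa, hGb, sub_zero]
  -- Step B : Fubini
  have hIcc : Icc t tf ⊆ Icc t₀ tf := Icc_subset_Icc ht0 le_rfl
  have hQint : MeasureTheory.Integrable (Function.uncurry Q)
      ((MeasureTheory.volume.restrict (Ioc a b)).prod
        (MeasureTheory.volume.restrict (Ioc t tf))) := by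
    rw [MeasureTheory.Measure.prod_restrict]
    have hQc' : ContinuousOn (Function.uncurry Q) (Icc a b ×ˢ Icc t tf) :=
      hQc.mono (prod_mono subset_rfl hIcc)
    have : MeasureTheory.IntegrableOn (Function.uncurry Q) (Icc a b ×ˢ Icc t tf) :=
      hQc'.integrableOn_compact (isCompact_Icc.prod isCompact_Icc)
    exact this.mono_set (prod_mono Ioc_subset_Icc_self Ioc_subset_Icc_self)
  have hswap : ∫ x in a..b, ∫ s in t..tf, Q x s = ∫ s in t..tf, ∫ x in a..b, Q x s := by
    rw [intervalIntegral.integral_of_le habl, intervalIntegral.integral_of_le htf1]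
    have h1 : ∀ x, ∫ s in t..tf, Q x s = ∫ s in Ioc t tf, Q x s := fun x =>
      intervalIntegral.integral_of_le htf1
    have h2 : ∀ s, ∫ x in a..b, Q x s = ∫ x in Ioc a b, Q x s := fun s =>
      intervalIntegral.integral_of_le habl
    simp only [h1, h2]
    exact MeasureTheory.integral_integral_swap hQint
  have hzero : ∫ x in a..b, (P x tf - P x t) = 0 := by
    have hcongr : ∫ x in a..b, (P x tf - P x t) = ∫ x in a..b, ∫ s in t..tf, Q x s := by
      refine intervalIntegral.integral_congr fun x hx => ?_
      rw [uIcc_of_le habl] at hx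
      exact (hA x hx).symm
    rw [hcongr, hswap]
    have : ∀ s ∈ Icc t tf, (∫ x in a..b, Q x s) = 0 := fun s hs => hC s (hIcc hs)
    rw [intervalIntegral.integral_congr (g := fun _ => (0:ℝ))
      (fun s hs => this s (by rwa [uIcc_of_le htf1] at hs))]
    simp
  -- conclude
  have hint_t : IntervalIntegrable (fun x => P x t) MeasureTheory.volume a b :=
    (sliceX hPc t hmemt).intervalIntegrable_of_Icc habl
  have hint_tf : IntervalIntegrable (fun x => P x tf) MeasureTheory.volume a b :=
    (sliceX hPc tf ⟨le_of_lt ht, le_rfl⟩).intervalIntegrable_of_Icc habl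
  have hsub := intervalIntegral.integral_sub hint_tf hint_t
  rw [hzero] at hsub
  have hfin : ∫ x in a..b, P x t = ∫ x in a..b, P x tf := by linarith
  simpa [hPdef] using hfin
end
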